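/- Let G be a finitely generated subgroup of germs of holomorphic diffeomorphisms of (ℂⁿ, 0) fixing the origin such that every element of G is periodic (some positive power equals the identity germ). Then G is finite. -/

import Mathlib

open Filter

set_option maxHeartbeats 1000000

lemma int_isJacobsonRing : IsJacobsonRing ℤ := by
  rw [isJacobsonRing_iff_prime_eq]
  intro P hP
  rcases eq_or_ne P ⊥ with rfl | hne
  · refine le_antisymm ?_ Ideal.le_jacobson
    intro x hx
    rw [Ideal.jacobson, Ideal.mem_sInf] at hx
    simp only [Submodule.mem_bot]
    by_contra hx0
    obtain ⟨q, hq, hqp⟩ := Nat.exists_infinite_primes (x.natAbs + 1)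
    have hqm : (Ideal.span {(q : ℤ)}).IsMaximal := by
      apply PrincipalIdealRing.isMaximal_of_irreducible
      exact (Int.prime_iff_natAbs_prime.mpr (by simpa using hqp)).irreducible
    have hxq : (q : ℤ) ∣ x := by
      have := hx ⟨bot_le, hqm⟩
      rwa [Ideal.mem_span_singleton] at this
    have : q ≤ x.natAbs := Nat.le_of_dvd (Int.natAbs_pos.mpr hx0)
      (Int.natAbs_dvd_natAbs.mpr (by simpa using hxq))
    omega
  · have : P.IsMaximal := by
      obtain ⟨a, rfl⟩ := (IsPrincipalIdealRing.principal P).principal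
      apply PrincipalIdealRing.isMaximal_of_irreducible
      refine (Ideal.span_singleton_prime ?_).mp hP |>.irreducible
      simpa using hne
    exact Ideal.jacobson_eq_self_of_isMaximal

lemma matrix_unipotent_eq_one {n : ℕ} {A : Type*} [CommRing A] [IsNoetherianRing A]
    [IsLocalRing A] [IsDomain A] {ℓ : ℕ} (hu : IsUnit (ℓ : A))
    (x : Matrix (Fin n) (Fin n) A) (hx : ∀ i j, x i j ∈ IsLocalRing.maximalIdeal A)
    (hp : (x + 1) ^ ℓ = 1) : x = 0 := by
  set J := IsLocalRing.maximalIdeal A with hJ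
  obtain ⟨ℓ', rfl⟩ : ∃ l', ℓ = l' + 1 := by
    rcases ℓ with _ | l'
    · rw [Nat.cast_zero] at hu
      exact absurd (isUnit_zero_iff.mp hu).symm one_ne_zero
    · exact ⟨l', rfl⟩
  have hmulr : ∀ (I : Ideal A) (y z : Matrix (Fin n) (Fin n) A),
      (∀ i j, y i j ∈ I) → ∀ i j, (y * z) i j ∈ I := by
    intro I y z hy i j
    rw [Matrix.mul_apply]
    exact Ideal.sum_mem _ fun t _ => I.mul_mem_right _ (hy i t)
  have key : ∀ k : ℕ, 1 ≤ k → (∀ i j, x i j ∈ J ^ k) → ∀ i j, x i j ∈ J ^ (k + 1) := by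
    intro k hk1 hk i j
    have hbin := (Commute.one_right x).add_pow (ℓ' + 1)
    rw [hp] at hbin
    simp only [one_pow, mul_one, Finset.sum_range_succ' _ (ℓ' + 1),
      Finset.sum_range_succ' _ ℓ', zero_add, pow_zero, Nat.choose_zero_right, Nat.cast_one,
      pow_one, Nat.choose_one_right] at hbin
    -- hbin : 1 = (T + x * ↑(ℓ'+1)) + 1
    have h0 : (∑ m ∈ Finset.range ℓ', x ^ (m + 1 + 1) *
        (((ℓ' + 1).choose (m + 1 + 1) : ℕ) : Matrix (Fin n) (Fin n) A)) + x * ((ℓ' + 1 : ℕ) :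
        Matrix (Fin n) (Fin n) A) = 0 := by
      exact right_eq_add.mp hbin
    have hT : ∀ i j, ((∑ m ∈ Finset.range ℓ', x ^ (m + 1 + 1) *
        (((ℓ' + 1).choose (m + 1 + 1) : ℕ) : Matrix (Fin n) (Fin n) A))) i j ∈ J ^ (k + 1) := by
      intro i j
      rw [Matrix.sum_apply]
      refine Ideal.sum_mem _ fun m _ => ?_
      have hxx : ∀ i j, (x * x) i j ∈ J ^ (k + 1) := by
        intro i j
        have h2k : (x * x) i j ∈ J ^ (k + k) := by
          rw [Matrix.mul_apply, pow_add]
          exact Ideal.sum_mem _ fun t _ => Ideal.mul_mem_mul (hk i t) (hk t j)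
        exact Ideal.pow_le_pow_right (by omega) h2k
      have : x ^ (m + 1 + 1) * (((ℓ' + 1).choose (m + 1 + 1) : ℕ) : Matrix (Fin n) (Fin n) A)
          = (x * x) * (x ^ m * (((ℓ' + 1).choose (m + 1 + 1) : ℕ) : Matrix (Fin n) (Fin n) A)) := by
        have hm : m + 1 + 1 = 2 + m := by omega
        rw [hm, pow_add, pow_two, mul_assoc]
      rw [this]
      exact hmulr _ _ _ hxx i j
    have hlx : ((ℓ' + 1 : ℕ) : A) * x i j ∈ J ^ (k + 1) := by
      have hentry : (x * (((ℓ' + 1 : ℕ)) : Matrix (Fin n) (Fin n) A)) i j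
          = x i j * ((ℓ' + 1 : ℕ) : A) := by
        rw [← Matrix.diagonal_natCast, Matrix.mul_diagonal]
      have := congrArg (fun M : Matrix (Fin n) (Fin n) A => M i j) h0
      simp only [Matrix.add_apply, Matrix.zero_apply] at this
      rw [hentry] at this
      have hx' : x i j * ((ℓ' + 1 : ℕ) : A) ∈ J ^ (k + 1) := by
        rw [eq_neg_of_add_eq_zero_right this]
        exact neg_mem (hT i j)
      rwa [mul_comm] at hx'
    obtain ⟨u, hu'⟩ := hu
    have hxe : x i j = ↑u⁻¹ * (((ℓ' + 1 : ℕ) : A) * x i j) := by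
      rw [← hu', ← mul_assoc, Units.inv_mul, one_mul]
    rw [hxe]
    exact Ideal.mul_mem_left _ _ hlx
  have hall : ∀ k : ℕ, ∀ i j, x i j ∈ J ^ (k + 1) := by
    intro k
    induction k with
    | zero => simpa using hx
    | succ k ih => exact key (k + 1) (by omega) ih
  ext i j
  have : x i j ∈ (⨅ k : ℕ, J ^ k) := by
    rw [Ideal.mem_iInf]
    intro k
    rcases Nat.eq_zero_or_pos k with rfl | hkp
    · simp
    · obtain ⟨k', rfl⟩ : ∃ k', k = k' + 1 := ⟨k - 1, by omega⟩
      exact hall k' i j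
  rw [Ideal.iInf_pow_eq_bot_of_isLocalRing _ (Ideal.IsMaximal.ne_top inferInstance)] at this
  simpa using this


/-- A field which is a finitely generated ring over `ℤ` is finite. -/
lemma aux_field_finite (K : Type*) [Field K] [Algebra.FiniteType ℤ K] : Finite K := by
  haveI := int_isJacobsonRing
  haveI hfin : Module.Finite ℤ K := finite_of_finite_type_of_isJacobsonRing ℤ K
  set p := ringChar K with hpdef
  haveI hcp : CharP K p := ringChar.charP K
  have hp0 : p ≠ 0 := by
    intro h0
    haveI : CharP K 0 := h0 ▸ hcp
    haveI : CharZero K := CharP.charP_to_charZero K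
    haveI : Algebra.IsIntegral ℤ K := Algebra.IsIntegral.of_finite ℤ K
    have f : ℚ →ₐ[ℤ] K := (algebraMap ℚ K).toIntAlgHom
    haveI : Algebra.IsIntegral ℤ ℚ :=
      Algebra.IsIntegral.of_injective f (RingHom.injective f.toRingHom)
    have hint : IsIntegral ℤ ((2⁻¹ : ℚ)) := Algebra.IsIntegral.isIntegral _
    obtain ⟨z, hz⟩ := IsIntegrallyClosed.isIntegral_iff.mp hint
    have h2 : ((2 * z : ℤ) : ℚ) = 1 := by
      push_cast
      rw [show ((z : ℚ)) = 2⁻¹ from hz]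
      norm_num
    have : (2 * z : ℤ) = 1 := by exact_mod_cast h2
    omega
  apply Module.finite_of_fg_torsion
  intro x
  refine ⟨⟨(p : ℤ), mem_nonZeroDivisors_of_ne_zero (by exact_mod_cast hp0)⟩, ?_⟩
  show ((p : ℤ) : ℤ) • x = 0
  rw [zsmul_eq_mul]
  have : ((p : ℤ) : K) = 0 := by
    push_cast
    exact CharP.cast_eq_zero K p
  rw [this, zero_mul]


lemma abstract_ring_part {n : ℕ} {G : Type*} [Group G] (R : Type*) [CommRing R]
    [IsDomain R] [CharZero R] [Algebra.FiniteType ℤ R]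
    (τ : G →* Matrix (Fin n) (Fin n) R)
    (keyτ : ∀ g : G, τ g = 1 → g = 1)
    (tors : ∀ g : G, IsOfFinOrder g) : Finite G := by
  classical
  haveI := int_isJacobsonRing
  haveI : IsJacobsonRing R := isJacobsonRing_of_finiteType (A := ℤ)
  haveI : IsNoetherianRing R := Algebra.FiniteType.isNoetherianRing ℤ R
  -- the congruence kernel mod a maximal ideal of residue characteristic p has only p-torsion
  have keyK : ∀ (m : Ideal R), m.IsMaximal → ∀ p : ℕ, p.Prime → (∀ ℓ : ℕ, (ℓ : R) ∈ m → p ∣ ℓ) →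
      ∀ h : G, ∀ ℓ : ℕ, ℓ.Prime → ℓ ≠ p → h ^ ℓ = 1 →
      (Ideal.Quotient.mk m).mapMatrix (τ h) = 1 → h = 1 := by
    intro m hm p hpp hcp h ℓ hℓ hℓp hpow hker
    haveI := hm
    haveI hmp : m.IsPrime := hm.isPrime
    set A := Localization.AtPrime m with hAdef
    haveI : IsNoetherianRing A := IsLocalization.isNoetherianRing m.primeCompl A inferInstance
    set φ := algebraMap R A with hφdef
    have hφinj : Function.Injective φ := IsLocalization.injective A
      (Ideal.primeCompl_le_nonZeroDivisors m)
    set x : Matrix (Fin n) (Fin n) A := φ.mapMatrix (τ h) - 1 with hxdef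
    have hker' : ∀ i j, (τ h - 1) i j ∈ m := by
      intro i j
      rw [← Ideal.Quotient.eq_zero_iff_mem]
      have h1 : (Ideal.Quotient.mk m).mapMatrix (τ h - 1) = 0 := by
        rw [map_sub, hker, map_one, sub_self]
      have h2 := congrArg (fun M : Matrix (Fin n) (Fin n) (R ⧸ m) => M i j) h1
      simpa [RingHom.mapMatrix_apply, Matrix.map_apply] using h2
    have hx : ∀ i j, x i j ∈ IsLocalRing.maximalIdeal A := by
      intro i j
      have h1 : x = φ.mapMatrix (τ h - 1) := by rw [map_sub, map_one, hxdef]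
      rw [h1]
      have h2 : (φ.mapMatrix (τ h - 1)) i j = φ ((τ h - 1) i j) := by
        simp [RingHom.mapMatrix_apply, Matrix.map_apply]
      rw [h2]
      exact (IsLocalization.AtPrime.to_map_mem_maximal_iff A m _).mpr (hker' i j)
    have hℓm : (ℓ : R) ∈ m.primeCompl := by
      intro hmem
      exact hℓp ((Nat.prime_dvd_prime_iff_eq hpp hℓ).mp (hcp ℓ hmem)).symm
    have hu : IsUnit ((ℓ : ℕ) : A) := by
      have := IsLocalization.map_units A (⟨(ℓ : R), hℓm⟩ : m.primeCompl)
      rwa [show φ ((ℓ : ℕ) : R) = ((ℓ : ℕ) : A) from map_natCast φ ℓ] at this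
    have hxp : (x + 1) ^ ℓ = 1 := by
      rw [hxdef, sub_add_cancel, ← map_pow, ← map_pow, hpow, map_one, map_one]
    have hx0 : x = 0 := matrix_unipotent_eq_one hu x hx hxp
    have hτh : τ h = 1 := by
      have h1 : φ.mapMatrix (τ h - 1) = 0 := by
        rw [map_sub, map_one, ← hxdef, hx0]
      have h2 : τ h - 1 = 0 := by
        ext i j
        have h3 := congrArg (fun M : Matrix (Fin n) (Fin n) A => M i j) h1
        simp only [RingHom.mapMatrix_apply, Matrix.map_apply, Matrix.zero_apply] at h3
        have h4 : (τ h - 1) i j = 0 := hφinj (by rw [h3, map_zero])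
        simpa using h4
      rwa [sub_eq_zero] at h2
    exact keyτ h hτh
  -- residue fields are finite, with prime residue characteristic
  have hres : ∀ (m : Ideal R), m.IsMaximal →
      Finite (R ⧸ m) ∧ ∃ p : ℕ, p.Prime ∧ (p : R) ∈ m ∧ (∀ ℓ : ℕ, (ℓ : R) ∈ m → p ∣ ℓ) := by
    intro m hm
    haveI := hm
    haveI hFT : Algebra.FiniteType ℤ (R ⧸ m) :=
      Algebra.FiniteType.of_surjective (Ideal.Quotient.mkₐ ℤ m)
        (Ideal.Quotient.mkₐ_surjective ℤ m)
    have hKfin : Finite (R ⧸ m) := @aux_field_finite (R ⧸ m) (Ideal.Quotient.field m) hFT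
    refine ⟨hKfin, ?_⟩
    -- there is a positive natural number in m
    have hsI : ∃ k : ℕ, 0 < k ∧ (k : R) ∈ m := by
      by_contra hno
      push_neg at hno
      have hinj : Function.Injective (fun k : ℕ => Ideal.Quotient.mk m ((k : R))) := by
        intro a b hab
        rcases le_total a b with hle | hle
        · by_contra hne
          have hmem : ((b - a : ℕ) : R) ∈ m := by
            rw [Nat.cast_sub hle, ← Ideal.Quotient.eq_zero_iff_mem, map_sub, sub_eq_zero]
            exact hab.symm
          exact hno (b - a) (by omega) hmem
        · by_contra hne
          have hmem : ((a - b : ℕ) : R) ∈ m := by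
            rw [Nat.cast_sub hle, ← Ideal.Quotient.eq_zero_iff_mem, map_sub, sub_eq_zero]
            exact hab
          exact hno (a - b) (by omega) hmem
      haveI := Finite.of_injective _ hinj
      exact not_finite ℕ
    classical
    set p := Nat.find hsI with hpdef
    obtain ⟨hppos, hpm⟩ : 0 < p ∧ (p : R) ∈ m := Nat.find_spec hsI
    have hmin : ∀ j, j < p → ¬(0 < j ∧ (j : R) ∈ m) := fun j hj => Nat.find_min hsI hj
    have hdvd : ∀ ℓ : ℕ, (ℓ : R) ∈ m → p ∣ ℓ := by
      intro ℓ hℓ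
      have hrm : ((ℓ % p : ℕ) : R) ∈ m := by
        have hle : p * (ℓ / p) ≤ ℓ := Nat.mul_div_le ℓ p
        have hmod : ℓ % p = ℓ - p * (ℓ / p) := by
          have := Nat.div_add_mod ℓ p
          omega
        rw [hmod, Nat.cast_sub hle]
        refine Submodule.sub_mem m hℓ ?_
        rw [Nat.cast_mul]
        exact Ideal.mul_mem_right _ m hpm
      have hlt : ℓ % p < p := Nat.mod_lt _ hppos
      have := hmin _ hlt
      have h0 : ℓ % p = 0 := by
        by_contra hne
        exact this ⟨Nat.pos_of_ne_zero hne, hrm⟩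
      exact Nat.dvd_of_mod_eq_zero h0
    have hp1 : p ≠ 1 := by
      intro h1
      rw [h1, Nat.cast_one] at hpm
      exact hm.ne_top ((Ideal.eq_top_iff_one m).mpr hpm)
    have hpp : p.Prime := by
      rw [Nat.prime_def]
      refine ⟨by omega, ?_⟩
      intro d hd
      obtain ⟨e, he⟩ := hd
      have hdpos : 0 < d := by
        rcases Nat.eq_zero_or_pos d with rfl | h
        · omega
        · exact h
      have hepos : 0 < e := by
        rcases Nat.eq_zero_or_pos e with rfl | h
        · omega
        · exact h
      have hmm : ((d : R)) * ((e : R)) ∈ m := by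
        rw [← Nat.cast_mul, ← he]
        exact hpm
      rcases hm.isPrime.mem_or_mem hmm with hdm | hem
      · right
        have : p ≤ d := by
          by_contra hlt
          exact hmin d (by omega) ⟨hdpos, hdm⟩
        have hdle : d ≤ p := Nat.le_of_dvd hppos ⟨e, he⟩
        omega
      · left
        have : p ≤ e := by
          by_contra hlt
          exact hmin e (by omega) ⟨hepos, hem⟩
        have hele : e ≤ p := Nat.le_of_dvd hppos ⟨d, by rw [he]; ring⟩
        have hep : e = p := by omega
        rw [hep] at he
        exact Nat.eq_of_mul_eq_mul_right hppos (by omega)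
    exact ⟨p, hpp, hpm, hdvd⟩
  -- choose two maximal ideals with different residue characteristics
  obtain ⟨m₁, hm₁⟩ := Ideal.exists_maximal R
  obtain ⟨hK₁fin, p₁, hp₁, hp₁m, hcp₁⟩ := hres m₁ hm₁
  have hex2 : ∃ m₂ : Ideal R, m₂.IsMaximal ∧ (p₁ : R) ∉ m₂ := by
    by_contra hall
    push_neg at hall
    have hj : ((p₁ : ℕ) : R) ∈ (⊥ : Ideal R).jacobson := by
      rw [Ideal.jacobson, Ideal.mem_sInf]
      rintro J ⟨-, hJ⟩
      exact hall J hJ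
    rw [(inferInstance : IsJacobsonRing R).out (Ideal.bot_prime (α := R)).isRadical] at hj
    have : ((p₁ : ℕ) : R) = 0 := by simpa using hj
    exact (Nat.cast_ne_zero.mpr hp₁.ne_zero) this
  obtain ⟨m₂, hm₂, hp₁m₂⟩ := hex2
  obtain ⟨hK₂fin, p₂, hp₂, hp₂m, hcp₂⟩ := hres m₂ hm₂
  have hp12 : p₁ ≠ p₂ := fun h => hp₁m₂ (h ▸ hp₂m)
  -- the product reduction map is injective
  set μ₁ : G →* Matrix (Fin n) (Fin n) (R ⧸ m₁) :=
    ((Ideal.Quotient.mk m₁).mapMatrix).toMonoidHom.comp τ with hμ₁def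
  set μ₂ : G →* Matrix (Fin n) (Fin n) (R ⧸ m₂) :=
    ((Ideal.Quotient.mk m₂).mapMatrix).toMonoidHom.comp τ with hμ₂def
  have hker1 : ∀ g : G, μ₁ g = 1 → μ₂ g = 1 → g = 1 := by
    intro g h1 h2
    by_contra hg1
    set k := orderOf g with hkdef
    have hkpos : 0 < k := (tors g).orderOf_pos
    have hk1 : k ≠ 1 := fun h => hg1 (orderOf_eq_one_iff.mp h)
    obtain ⟨ℓ, hℓ, hdvd⟩ := Nat.exists_prime_and_dvd hk1
    set h' := g ^ (k / ℓ) with hh'def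
    have hh'pow : h' ^ ℓ = 1 := by
      rw [hh'def, ← pow_mul, Nat.div_mul_cancel hdvd, hkdef, pow_orderOf_eq_one]
    have hh'ne : h' ≠ 1 := by
      intro hh
      have : k ∣ k / ℓ := orderOf_dvd_of_pow_eq_one (hh'def ▸ hh)
      have hlt : k / ℓ < k := Nat.div_lt_self hkpos hℓ.one_lt
      have hpos : 0 < k / ℓ := Nat.div_pos (Nat.le_of_dvd hkpos hdvd) hℓ.pos
      exact absurd (Nat.le_of_dvd hpos this) (by omega)
    have hμ1 : μ₁ h' = 1 := by rw [hh'def, map_pow, h1, one_pow]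
    have hμ2 : μ₂ h' = 1 := by rw [hh'def, map_pow, h2, one_pow]
    rcases eq_or_ne ℓ p₁ with rfl | hne1
    · exact hh'ne (keyK m₂ hm₂ p₂ hp₂ hcp₂ h' ℓ hℓ hp12 hh'pow hμ2)
    · exact hh'ne (keyK m₁ hm₁ p₁ hp₁ hcp₁ h' ℓ hℓ hne1 hh'pow hμ1)
  haveI : Finite (Matrix (Fin n) (Fin n) (R ⧸ m₁)) :=
    inferInstanceAs (Finite (Fin n → Fin n → (R ⧸ m₁)))
  haveI : Finite (Matrix (Fin n) (Fin n) (R ⧸ m₂)) :=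
    inferInstanceAs (Finite (Fin n → Fin n → (R ⧸ m₂)))
  apply Finite.of_injective (fun g : G => (μ₁ g, μ₂ g))
  intro a b hab
  rw [Prod.mk.injEq] at hab
  have hd : a⁻¹ * b = 1 := by
    apply hker1
    · rw [map_mul, ← hab.1, ← map_mul, inv_mul_cancel, map_one]
    · rw [map_mul, ← hab.2, ← map_mul, inv_mul_cancel, map_one]
  rw [← inv_mul_cancel a]  at hd
  exact (mul_left_cancel hd).symm


lemma complex_matrix_part {n : ℕ} {G : Type*} [Group G] (hFG : Group.FG G)
    (ρ : G →* Matrix (Fin n) (Fin n) ℂ)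
    (keyρ : ∀ g : G, ρ g = 1 → g = 1)
    (tors : ∀ g : G, IsOfFinOrder g) : Finite G := by
  classical
  obtain ⟨R₀, hR₀fg, hmemρ⟩ : ∃ R₀ : Subalgebra ℤ ℂ, R₀.FG ∧
      ∀ g : G, ∀ i j, ρ g i j ∈ R₀ := by
    obtain ⟨S, hSgen, hSfin⟩ := Group.fg_iff.mp hFG
    set T : Set ℂ := ⋃ g ∈ S, (Set.range (fun p : Fin n × Fin n => ρ g p.1 p.2) ∪
      Set.range (fun p : Fin n × Fin n => ρ g⁻¹ p.1 p.2)) with hTdef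
    have hTfin : T.Finite :=
      hSfin.biUnion (fun g _ => (Set.finite_range _).union (Set.finite_range _))
    refine ⟨Algebra.adjoin ℤ T, Subalgebra.fg_def.mpr ⟨T, hTfin, rfl⟩, ?_⟩
    set R₀ : Subalgebra ℤ ℂ := Algebra.adjoin ℤ T with hR₀def
    set H : Subgroup G :=
    { carrier := {g | (∀ i j, ρ g i j ∈ R₀) ∧ (∀ i j, ρ g⁻¹ i j ∈ R₀)}
      one_mem' := by
        have hone : ∀ i j : Fin n, (1 : Matrix (Fin n) (Fin n) ℂ) i j ∈ R₀ := by
          intro i j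
          rw [Matrix.one_apply]
          split_ifs
          exacts [one_mem R₀, zero_mem R₀]
        exact ⟨fun i j => by rw [map_one]; exact hone i j,
          fun i j => by rw [inv_one, map_one]; exact hone i j⟩
      mul_mem' := by
        rintro a b ⟨ha1, ha2⟩ ⟨hb1, hb2⟩
        constructor
        · intro i j
          rw [map_mul, Matrix.mul_apply]
          exact Subalgebra.sum_mem _ fun t _ => mul_mem (ha1 i t) (hb1 t j)
        · intro i j
          rw [mul_inv_rev, map_mul, Matrix.mul_apply]
          exact Subalgebra.sum_mem _ fun t _ => mul_mem (hb2 i t) (ha2 t j)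
      inv_mem' := by
        rintro a ⟨h1, h2⟩
        exact ⟨h2, by rw [inv_inv]; exact h1⟩ } with hHdef
    have hsub : S ⊆ ↑H := by
      intro g hg
      constructor
      · intro i j
        exact Algebra.subset_adjoin (Set.mem_biUnion hg (Or.inl ⟨(i, j), rfl⟩))
      · intro i j
        exact Algebra.subset_adjoin (Set.mem_biUnion hg (Or.inr ⟨(i, j), rfl⟩))
    have hle : Subgroup.closure S ≤ H := (Subgroup.closure_le H).2 hsub
    rw [hSgen] at hle
    exact fun g => ((hle (Subgroup.mem_top g)).1)
  haveI : Algebra.FiniteType ℤ ↥R₀ := (Subalgebra.fg_iff_finiteType R₀).mp hR₀fg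
  set t : G → Matrix (Fin n) (Fin n) ↥R₀ := fun g i j => (⟨ρ g i j, hmemρ g i j⟩ : ↥R₀)
    with htdef
  set vM : Matrix (Fin n) (Fin n) ↥R₀ →+* Matrix (Fin n) (Fin n) ℂ :=
    (R₀.val.toRingHom).mapMatrix with hvMdef
  have hvMinj : Function.Injective vM := by
    intro a b hab
    ext i j
    have h := congrArg (fun M : Matrix (Fin n) (Fin n) ℂ => M i j) hab
    simp only [hvMdef, RingHom.mapMatrix_apply, Matrix.map_apply] at h
    exact h
  have hcomm : ∀ g : G, vM (t g) = ρ g := by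
    intro g
    ext i j
    simp [hvMdef, htdef, RingHom.mapMatrix_apply, Matrix.map_apply]
    rfl
  set τ : G →* Matrix (Fin n) (Fin n) ↥R₀ :=
  { toFun := t
    map_one' := hvMinj (by rw [hcomm, map_one, map_one])
    map_mul' := fun a b => hvMinj (by rw [map_mul, hcomm, hcomm, hcomm, map_mul]) } with hτdef
  have keyτ : ∀ g : G, τ g = 1 → g = 1 := by
    intro g hτ1
    apply keyρ
    have : vM (τ g) = ρ g := hcomm g
    rw [hτ1, map_one] at this
    exact this.symm
  exact abstract_ring_part ↥R₀ τ keyτ tors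


/-- A finitely generated group of germs of holomorphic diffeomorphisms of `(ℂⁿ, 0)` all of
whose elements are periodic is finite.  The group of germs is modeled by an abstract group
`G` together with a faithful realization `F` of its elements as analytic local
diffeomorphisms fixing `0`, compatible with composition at the level of germs. -/
theorem finitely_generated_group_of_periodic_germs_is_finite (n : ℕ)
    (G : Type*) [Group G] (hFG : Group.FG G)
    (F : G → (Fin n → ℂ) → (Fin n → ℂ))
    (hfix : ∀ g, F g 0 = 0)
    (han : ∀ g, AnalyticAt ℂ (F g) 0)
    (hone : F 1 =ᶠ[nhds (0 : Fin n → ℂ)] id)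
    (hmul : ∀ g h : G, F (g * h) =ᶠ[nhds (0 : Fin n → ℂ)] (F g ∘ F h))
    (hfaithful : ∀ g : G, F g =ᶠ[nhds (0 : Fin n → ℂ)] id → g = 1)
    (hper : ∀ g : G, ∃ k : ℕ, 0 < k ∧ F (g ^ k) =ᶠ[nhds (0 : Fin n → ℂ)] id) :
    Finite G := by
  classical
  -- every element has finite order
  have tors : ∀ g : G, IsOfFinOrder g := by
    intro g
    obtain ⟨k, hk, h⟩ := hper g
    exact isOfFinOrder_iff_pow_eq_one.mpr ⟨k, hk, hfaithful _ h⟩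
  have hdiff : ∀ g : G, DifferentiableAt ℂ (F g) 0 := fun g => (han g).differentiableAt
  have hten : ∀ g : G, Tendsto (F g) (nhds 0) (nhds 0) := by
    intro g
    have := (han g).continuousAt.tendsto
    rwa [hfix g] at this
  -- the derivative monoid hom
  let σ : G →* ((Fin n → ℂ) →L[ℂ] (Fin n → ℂ)) :=
  { toFun := fun g => fderiv ℂ (F g) 0
    map_one' := by
      show fderiv ℂ (F 1) 0 = 1
      rw [(hone).fderiv_eq, fderiv_id]; rfl
    map_mul' := by
      intro g h
      have h1 : fderiv ℂ (F (g * h)) 0 = fderiv ℂ (F g ∘ F h) 0 := (hmul g h).fderiv_eq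
      have h2 : fderiv ℂ (F g ∘ F h) 0 = (fderiv ℂ (F g) (F h 0)).comp (fderiv ℂ (F h) 0) :=
        fderiv_comp 0 (by rw [hfix h]; exact hdiff g) (hdiff h)
      show fderiv ℂ (F (g * h)) 0 = _
      rw [h1, h2, hfix h]
      rfl }
  -- faithfulness of σ on torsion elements
  have keyσ : ∀ g : G, IsOfFinOrder g → σ g = 1 → g = 1 := by
    intro g hfin hg
    set k := orderOf g with hkdef
    have hkpos : 0 < k := hfin.orderOf_pos
    set Φ : (Fin n → ℂ) → (Fin n → ℂ) :=
      fun x => (k : ℂ)⁻¹ • ∑ i ∈ Finset.range k, F (g ^ i) x with hΦdef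
    have hΦa : AnalyticAt ℂ Φ 0 :=
      (analyticAt_const (v := (k : ℂ)⁻¹)).fun_smul ((Finset.range k).analyticAt_fun_sum (fun i _ => han (g ^ i)))
    have hone' : ∀ i : ℕ, HasFDerivAt (F (g ^ i)) (1 : (Fin n → ℂ) →L[ℂ] (Fin n → ℂ)) 0 := by
      intro i
      have h1 : fderiv ℂ (F (g ^ i)) 0 = 1 := by
        have : σ (g ^ i) = 1 := by rw [map_pow, hg, one_pow]
        exact this
      have := (hdiff (g ^ i)).hasFDerivAt
      rwa [h1] at this
    have hΦd : HasFDerivAt Φ (1 : (Fin n → ℂ) →L[ℂ] (Fin n → ℂ)) 0 := by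
      have hs : HasFDerivAt (fun x => ∑ i ∈ Finset.range k, F (g ^ i) x)
          ((k : ℕ) • (1 : (Fin n → ℂ) →L[ℂ] (Fin n → ℂ))) 0 := by
        have := HasFDerivAt.sum (fun i (_ : i ∈ Finset.range k) => hone' i)
        simpa using this
      have := hs.const_smul ((k : ℂ)⁻¹)
      have heq : (k : ℂ)⁻¹ • ((k : ℕ) • (1 : (Fin n → ℂ) →L[ℂ] (Fin n → ℂ))) = 1 := by
        rw [← Nat.cast_smul_eq_nsmul ℂ, smul_smul, inv_mul_cancel₀ (by exact_mod_cast hkpos.ne'),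
          one_smul]
      rwa [heq] at this
    have hsΦ : HasStrictFDerivAt Φ
        (↑(ContinuousLinearEquiv.refl ℂ (Fin n → ℂ)) : (Fin n → ℂ) →L[ℂ] (Fin n → ℂ)) 0 := by
      have h := hΦa.hasStrictFDerivAt
      rw [hΦd.fderiv] at h
      exact h
    set ψ := hsΦ.toOpenPartialHomeomorph Φ with hψdef
    have hψ0 : (0 : Fin n → ℂ) ∈ ψ.source := hsΦ.mem_toOpenPartialHomeomorph_source
    have hψcoe : ∀ x, ψ x = Φ x := fun x => rfl
    -- equivariance
    have hequi : (fun x => Φ (F g x)) =ᶠ[nhds 0] Φ := by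
      have hterm : ∀ i : ℕ, (fun x => F (g ^ i) (F g x)) =ᶠ[nhds (0 : Fin n → ℂ)] F (g ^ (i + 1)) := by
        intro i
        have h1 : F (g ^ i * g) =ᶠ[nhds (0 : Fin n → ℂ)] (F (g ^ i)) ∘ (F g) := hmul (g ^ i) g
        have h2 : g ^ i * g = g ^ (i + 1) := (pow_succ g i).symm
        rw [h2] at h1
        exact h1.symm
      have hall : ∀ᶠ x in nhds (0 : Fin n → ℂ), ∀ i ∈ Finset.range k,
          F (g ^ i) (F g x) = F (g ^ (i + 1)) x := by
        rw [Filter.eventually_all_finset]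
        intro i _
        exact hterm i
      filter_upwards [hall] with x hx
      simp only [hΦdef]
      congr 1
      rw [Finset.sum_congr rfl hx]
      -- ∑_{i<k} F (g^(i+1)) x = ∑_{i<k} F(g^i) x
      have h1 : ∑ i ∈ Finset.range k, F (g ^ (i + 1)) x
          = ∑ i ∈ Finset.range (k + 1), F (g ^ i) x - F (g ^ 0) x := by
        rw [Finset.sum_range_succ' (fun i => F (g ^ i) x) k]
        abel
      rw [h1, Finset.sum_range_succ]
      have : g ^ k = g ^ 0 := by rw [pow_zero, hkdef, pow_orderOf_eq_one]
      rw [this]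
      abel
    have hFg : F g =ᶠ[nhds (0 : Fin n → ℂ)] id := by
      have hsrc : ∀ᶠ x in nhds (0 : Fin n → ℂ), x ∈ ψ.source :=
        ψ.open_source.mem_nhds hψ0
      have hsrc2 : ∀ᶠ x in nhds (0 : Fin n → ℂ), F g x ∈ ψ.source :=
        (hten g).eventually hsrc
      filter_upwards [hsrc, hsrc2, hequi] with x h1 h2 h3
      exact ψ.injOn h2 h1 (by simp only [hψcoe, id_eq]; exact h3)
    exact hfaithful g hFg
  -- the matrix representation
  set Mhom : ((Fin n → ℂ) →L[ℂ] (Fin n → ℂ)) →* Matrix (Fin n) (Fin n) ℂ :=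
  { toFun := fun f => LinearMap.toMatrix' (↑f : (Fin n → ℂ) →ₗ[ℂ] (Fin n → ℂ))
    map_one' := by
      show LinearMap.toMatrix' ((1 : (Fin n → ℂ) →L[ℂ] (Fin n → ℂ)) :
        (Fin n → ℂ) →ₗ[ℂ] (Fin n → ℂ)) = 1
      rw [ContinuousLinearMap.one_def, ContinuousLinearMap.coe_id, LinearMap.toMatrix'_id]
    map_mul' := by
      intro f g
      show LinearMap.toMatrix' _ = _
      rw [ContinuousLinearMap.mul_def, ContinuousLinearMap.toLinearMap_comp,
        LinearMap.toMatrix'_comp] } with hMhomdef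
  set ρ : G →* Matrix (Fin n) (Fin n) ℂ := Mhom.comp σ with hρdef
  have keyρ : ∀ g : G, ρ g = 1 → g = 1 := by
    intro g hg
    apply keyσ g (tors g)
    have h1 : LinearMap.toMatrix' (↑(σ g) : (Fin n → ℂ) →ₗ[ℂ] (Fin n → ℂ)) = 1 := hg
    have h2 : (↑(σ g) : (Fin n → ℂ) →ₗ[ℂ] (Fin n → ℂ)) = LinearMap.id := by
      apply LinearMap.toMatrix'.injective
      rw [h1, LinearMap.toMatrix'_id]
    apply ContinuousLinearMap.coe_injective
    rw [h2, ContinuousLinearMap.one_def, ContinuousLinearMap.coe_id]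
  exact complex_matrix_part hFG ρ keyρ tors
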